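/- Let Γ = {σ a k-algebra automorphism of A_{q,n} : σ(x_1) = x_1 and σ(x_i) − x_i ∈ S for all i = 2, …, q}, where S is the k-linear span of x_1², …, x_1^{n−1} in A_{q,n}. Then the multiplication (composition) map Γ × (I_{q,n} ∩ G_1) → I_{q,n}, (γ, σ) ↦ γ ∘ σ, is a bijection. -/

import Mathlib

set_option synthInstance.maxHeartbeats 400000
set_option maxHeartbeats 1000000

noncomputable section




/-- The ring of `n`-nil polynomials `A_{q,n} = k[x_1,…,x_q]/m_0^n`. -/
abbrev Aqn (k : Type) [Field k] (q n : ℕ) : Type :=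
  MvPolynomial (Fin q) k ⧸
    (Ideal.span (Set.range (MvPolynomial.X : Fin q → MvPolynomial (Fin q) k))) ^ n

/-- The image of the variable `x_i` in `A_{q,n}`. -/
def xA (k : Type) [Field k] (q n : ℕ) (i : Fin q) : Aqn k q n :=
  Ideal.Quotient.mk _ (MvPolynomial.X i)

/-- The maximal ideal `m` of `A_{q,n}` generated by `x_1, …, x_q`. -/
def mA (k : Type) [Field k] (q n : ℕ) : Ideal (Aqn k q n) :=
  Ideal.span (Set.range (xA k q n))

/-- The ideal `q_1` of `A_{q,n}` generated by `x_2, …, x_q`. -/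
def q1A (k : Type) [Field k] (q n : ℕ) [NeZero q] : Ideal (Aqn k q n) :=
  Ideal.span {y | ∃ i : Fin q, i ≠ 0 ∧ y = xA k q n i}

/-- The `k`-linear span `S` of `x_1², …, x_1^(n-1)` in `A_{q,n}`. -/
def SA (k : Type) [Field k] (q n : ℕ) [NeZero q] : Submodule k (Aqn k q n) :=
  Submodule.span k {y | ∃ j : ℕ, 2 ≤ j ∧ j ≤ n - 1 ∧ y = xA k q n 0 ^ j}

/-- The group `I_{q,n}` of linearly trivial automorphisms, as a set. -/
def IqnSet (k : Type) [Field k] (q n : ℕ) : Set (Aqn k q n ≃ₐ[k] Aqn k q n) :=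
  {σ | ∀ i, σ (xA k q n i) - xA k q n i ∈ (mA k q n) ^ 2}

/-- The stabilizer `G_1` of the ideal `q_1`, as a set. -/
def G1Set (k : Type) [Field k] (q n : ℕ) [NeZero q] : Set (Aqn k q n ≃ₐ[k] Aqn k q n) :=
  {σ | Ideal.map σ (q1A k q n) = q1A k q n}

/-- The subgroup `Γ` of automorphisms fixing `x_1` and moving each `x_i` (`i ≥ 2`) by an
element of the span `S` of `x_1², …, x_1^(n-1)`, as a set. -/
def GammaSet (k : Type) [Field k] (q n : ℕ) [NeZero q] :
    Set (Aqn k q n ≃ₐ[k] Aqn k q n) :=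
  {σ | σ (xA k q n 0) = xA k q n 0 ∧
    ∀ i : Fin q, i ≠ 0 → σ (xA k q n i) - xA k q n i ∈ SA k q n}


namespace GammaAux
open MvPolynomial

variable (k : Type) [Field k] (q n : ℕ)

/-- The irrelevant maximal ideal of the polynomial ring. -/
abbrev MM : Ideal (MvPolynomial (Fin q) k) :=
  Ideal.span (Set.range (X : Fin q → MvPolynomial (Fin q) k))

theorem degree_mono {a b : Fin q →₀ ℕ} (h : a ≤ b) : a.degree ≤ b.degree := by
  have hb : b = a + (b - a) := by rw [add_tsub_cancel_of_le h]
  rw [hb]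
  simp [Finsupp.degree_eq_weight_one, map_add]

theorem degree_add (a b : Fin q →₀ ℕ) : (a + b).degree = a.degree + b.degree := by
  simp [Finsupp.degree_eq_weight_one, map_add]

theorem degree_single (i : Fin q) (e : ℕ) : (Finsupp.single i e).degree = e := by
  rcases eq_or_ne e 0 with rfl | he
  · simp
  · exact Finsupp.degree_single i e

/-- The span of monomials of degree at least `t`. -/
def DD (t : ℕ) : Ideal (MvPolynomial (Fin q) k) :=
  Ideal.span ((fun e => monomial e (1 : k)) '' {d : Fin q →₀ ℕ | t ≤ d.degree})

theorem mem_DD {t : ℕ} {p : MvPolynomial (Fin q) k} :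
    p ∈ DD k q t ↔ ∀ d ∈ p.support, t ≤ d.degree := by
  rw [DD, mem_ideal_span_monomial_image]
  constructor
  · intro h d hd
    obtain ⟨si, hsi, hle⟩ := h d hd
    exact hsi.trans (degree_mono q hle)
  · intro h d hd
    exact ⟨d, h d hd, le_rfl⟩

theorem DD_mul_DD (a b : ℕ) : DD k q a * DD k q b ≤ DD k q (a + b) := by
  rw [Ideal.mul_le]
  intro r hr s hs
  rw [mem_DD] at hr hs ⊢
  intro d hd
  obtain ⟨d1, hd1, d2, hd2, rfl⟩ := Finset.mem_add.mp (support_mul r s hd)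
  rw [degree_add q]
  exact add_le_add (hr d1 hd1) (hs d2 hd2)

theorem DD_zero : DD k q 0 = ⊤ := by
  rw [eq_top_iff]
  intro p _
  rw [mem_DD]
  intro d _
  exact Nat.zero_le _

theorem MM_le_DD_one : MM k q ≤ DD k q 1 := by
  rw [Ideal.span_le]
  rintro _ ⟨i, rfl⟩
  rw [SetLike.mem_coe, mem_DD]
  intro d hd
  rw [support_X, Finset.mem_singleton] at hd
  subst hd
  rw [degree_single q]

theorem X_mul_monomial' (j : Fin q) (d : Fin q →₀ ℕ) (hj : d j ≠ 0) :
    monomial (d - Finsupp.single j 1) (1 : k) * X j = monomial d 1 := by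
  rw [X, monomial_mul, mul_one, tsub_add_cancel_of_le]
  rw [Finsupp.single_le_iff]
  omega

theorem DD_le_MMpow (t : ℕ) : DD k q t ≤ MM k q ^ t := by
  induction t with
  | zero => rw [pow_zero, Ideal.one_eq_top]; exact le_top
  | succ t ih =>
    rw [DD, Ideal.span_le]
    rintro _ ⟨d, hd, rfl⟩
    have hdeg : t + 1 ≤ d.degree := hd
    have hd0 : d ≠ 0 := by
      intro h
      rw [h, map_zero] at hdeg
      omega
    obtain ⟨j, hj⟩ := Finsupp.support_nonempty_iff.mpr hd0
    have hj' : d j ≠ 0 := Finsupp.mem_support_iff.mp hj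
    have h1 : monomial (d - Finsupp.single j 1) (1 : k) ∈ MM k q ^ t := by
      apply ih
      rw [mem_DD]
      intro e he
      classical
      rw [support_monomial, if_neg (one_ne_zero : (1:k) ≠ 0), Finset.mem_singleton] at he
      subst he
      have hcan : d - Finsupp.single j 1 + Finsupp.single j 1 = d := by
        rw [tsub_add_cancel_of_le]
        rw [Finsupp.single_le_iff]
        omega
      have := degree_add q (d - Finsupp.single j 1) (Finsupp.single j 1)
      rw [hcan, degree_single q] at this
      omega
    have h2 : X j ∈ MM k q := Ideal.subset_span ⟨j, rfl⟩
    have hmem : monomial d (1:k) ∈ MM k q ^ (t+1) := by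
      rw [← X_mul_monomial' k q j d hj', pow_succ]
      exact Ideal.mul_mem_mul h1 h2
    exact hmem

theorem MMpow_eq_DD (t : ℕ) : MM k q ^ t = DD k q t := by
  refine le_antisymm ?_ (DD_le_MMpow k q t)
  have h1 : ∀ s : ℕ, DD k q 1 ^ s ≤ DD k q s := by
    intro s
    induction s with
    | zero => rw [pow_zero, Ideal.one_eq_top, DD_zero]
    | succ s ih =>
      calc DD k q 1 ^ (s + 1) = DD k q 1 ^ s * DD k q 1 := pow_succ _ _
        _ ≤ DD k q s * DD k q 1 := Ideal.mul_mono_left ih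
        _ ≤ DD k q (s + 1) := DD_mul_DD k q s 1
  calc MM k q ^ t ≤ DD k q 1 ^ t := Ideal.pow_right_mono (MM_le_DD_one k q) t
    _ ≤ DD k q t := h1 t

theorem mem_MMpow {t : ℕ} {p : MvPolynomial (Fin q) k} :
    p ∈ MM k q ^ t ↔ ∀ d ∈ p.support, t ≤ d.degree := by
  rw [MMpow_eq_DD, mem_DD]


/-! ### Downstairs: the quotient ring -/

/-- The quotient map as an algebra hom. -/
def mkh : MvPolynomial (Fin q) k →ₐ[k] Aqn k q n := Ideal.Quotient.mkₐ k (MM k q ^ n)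

theorem xA_eq (i : Fin q) : xA k q n i = mkh k q n (X i) := rfl

theorem mkh_surjective : Function.Surjective (mkh k q n) :=
  Ideal.Quotient.mkₐ_surjective k _

theorem mA_eq_map : mA k q n = Ideal.map (mkh k q n) (MM k q) := by
  rw [mA, MM, Ideal.map_span, ← Set.range_comp]
  rfl

theorem mA_pow_eq_map (t : ℕ) : mA k q n ^ t = Ideal.map (mkh k q n) (MM k q ^ t) := by
  rw [mA_eq_map, Ideal.map_pow]

theorem mem_mA_pow {t : ℕ} (ht : t ≤ n) (p : MvPolynomial (Fin q) k) :
    mkh k q n p ∈ mA k q n ^ t ↔ ∀ d ∈ p.support, t ≤ d.degree := by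
  rw [mA_pow_eq_map]
  have h1 : mkh k q n p = Ideal.Quotient.mk (MM k q ^ n) p := rfl
  have h2 : Ideal.map (mkh k q n) (MM k q ^ t)
      = Ideal.map (Ideal.Quotient.mk (MM k q ^ n)) (MM k q ^ t) := rfl
  rw [h1, h2, Ideal.mem_quotient_iff_mem_sup,
    sup_eq_left.mpr (Ideal.pow_le_pow_right ht), mem_MMpow]

theorem mA_pow_n : mA k q n ^ n = ⊥ := by
  rw [mA_pow_eq_map]
  exact Ideal.map_quotient_self _

/-- The ideal `(x_2, …, x_q)` upstairs. -/
def Q1 [NeZero q] : Ideal (MvPolynomial (Fin q) k) :=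
  Ideal.span (X '' {j : Fin q | j ≠ 0})

theorem q1A_eq_map [NeZero q] : q1A k q n = Ideal.map (mkh k q n) (Q1 k q) := by
  rw [q1A, Q1, Ideal.map_span]
  congr 1
  ext y
  constructor
  · rintro ⟨i, hi, rfl⟩
    exact ⟨X i, ⟨i, hi, rfl⟩, rfl⟩
  · rintro ⟨_, ⟨i, hi, rfl⟩, rfl⟩
    exact ⟨i, hi, rfl⟩

theorem mem_q1A [NeZero q] (p : MvPolynomial (Fin q) k) :
    mkh k q n p ∈ q1A k q n ↔
      ∀ d ∈ p.support, (∃ j : Fin q, j ≠ 0 ∧ d j ≠ 0) ∨ n ≤ d.degree := by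
  have h2 : Ideal.map (mkh k q n) (Q1 k q)
      = Ideal.map (Ideal.Quotient.mk (MM k q ^ n)) (Q1 k q) := rfl
  have h1 : mkh k q n p = Ideal.Quotient.mk (MM k q ^ n) p := rfl
  rw [q1A_eq_map, h1, h2, Ideal.mem_quotient_iff_mem_sup]
  have hQ : Q1 k q = Ideal.span
      ((fun e => monomial e (1:k)) '' ((fun j => Finsupp.single j 1) '' {j : Fin q | j ≠ 0})) := by
    rw [Q1, Set.image_image]
    rfl
  have hun : Q1 k q ⊔ MM k q ^ n = Ideal.span
      ((fun e => monomial e (1:k)) ''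
        (((fun j => Finsupp.single j 1) '' {j : Fin q | j ≠ 0})
          ∪ {d : Fin q →₀ ℕ | n ≤ d.degree})) := by
    rw [Set.image_union, Ideal.span_union, ← hQ, MMpow_eq_DD, DD]
  rw [hun, mem_ideal_span_monomial_image]
  apply forall₂_congr
  intro d hd
  constructor
  · rintro ⟨si, hsi | hsi, hle⟩
    · obtain ⟨j, hj, rfl⟩ := hsi
      refine Or.inl ⟨j, hj, ?_⟩
      have := Finsupp.single_le_iff.mp hle
      omega
    · exact Or.inr (le_trans hsi (degree_mono q hle))
  · rintro (⟨j, hj, hdj⟩ | hn)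
    · exact ⟨Finsupp.single j 1, Or.inl ⟨j, hj, rfl⟩, Finsupp.single_le_iff.mpr (by omega)⟩
    · exact ⟨d, Or.inr hn, le_rfl⟩


/-! ### The span `S` and decomposition lemmas -/

theorem xA_mem_mA (i : Fin q) : xA k q n i ∈ mA k q n :=
  Ideal.subset_span ⟨i, rfl⟩

theorem SA_le_mA_pow_two [NeZero q] :
    ∀ s ∈ SA k q n, s ∈ mA k q n ^ 2 := by
  intro s hs
  have : SA k q n ≤ (mA k q n ^ 2).restrictScalars k := by
    rw [SA, Submodule.span_le]
    rintro _ ⟨j, hj2, hjn, rfl⟩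
    simp only [SetLike.mem_coe, Submodule.restrictScalars_mem]
    exact Ideal.pow_le_pow_right hj2 (Ideal.pow_mem_pow (xA_mem_mA k q n 0) j)
  exact this hs

theorem xA_pow_mem_SA [NeZero q] {e : ℕ} (he : 2 ≤ e) :
    xA k q n 0 ^ e ∈ SA k q n := by
  rcases le_or_gt e (n - 1) with hen | hen
  · exact Submodule.subset_span ⟨e, he, hen, rfl⟩
  · have h0 : xA k q n 0 ^ e = 0 := by
      rw [xA_eq, ← map_pow]
      have : (X 0 : MvPolynomial (Fin q) k) ^ e ∈ MM k q ^ n := by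
        rw [mem_MMpow]
        intro d hd
        classical
        rw [X_pow_eq_monomial, support_monomial,
          if_neg (one_ne_zero : (1:k) ≠ 0), Finset.mem_singleton] at hd
        subst hd
        rw [degree_single q]
        omega
      exact (Ideal.Quotient.eq_zero_iff_mem).mpr this
    rw [h0]
    exact Submodule.zero_mem _

/-- Lemma A: decomposition of an element of `m^t` into pure part (in `S`) and `q1`-part. -/
theorem decomp_mA_pow [NeZero q] {t : ℕ} (ht2 : 2 ≤ t) (htn : t ≤ n) {a : Aqn k q n}
    (ha : a ∈ mA k q n ^ t) :
    ∃ s ∈ SA k q n, a - s ∈ q1A k q n ∧ a - s ∈ mA k q n ^ t := by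
  classical
  rw [mA_pow_eq_map] at ha
  obtain ⟨p, hp, rfl⟩ := (Ideal.mem_map_iff_of_surjective _ (mkh_surjective k q n)).mp ha
  rw [mem_MMpow] at hp
  set P : (Fin q →₀ ℕ) → Prop := fun d => ∀ j : Fin q, j ≠ 0 → d j = 0 with hP
  set p1 : MvPolynomial (Fin q) k := AddMonoidAlgebra.ofCoeff (Finsupp.filter P (AddMonoidAlgebra.coeff p)) with hp1
  set p2 : MvPolynomial (Fin q) k :=
    AddMonoidAlgebra.ofCoeff (Finsupp.filter (fun d => ¬ P d) (AddMonoidAlgebra.coeff p)) with hp2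
  have hsplit : p1 + p2 = p :=
    congrArg AddMonoidAlgebra.ofCoeff (Finsupp.filter_pos_add_filter_neg (AddMonoidAlgebra.coeff p) P)
  have hsupp1 : p1.support ⊆ p.support := by
    show (Finsupp.filter P (AddMonoidAlgebra.coeff p)).support ⊆ (AddMonoidAlgebra.coeff p).support
    rw [Finsupp.support_filter]
    exact Finset.filter_subset _ _
  have hsupp2 : p2.support ⊆ p.support := by
    show (Finsupp.filter (fun d => ¬ P d) (AddMonoidAlgebra.coeff p)).support ⊆ (AddMonoidAlgebra.coeff p).support
    rw [Finsupp.support_filter]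
    exact Finset.filter_subset _ _
  refine ⟨mkh k q n p1, ?_, ?_, ?_⟩
  · -- pure part lies in S
    rw [(as_sum p1), map_sum]
    apply Submodule.sum_mem
    intro d hd
    have hd2 : d ∈ (Finsupp.filter P (AddMonoidAlgebra.coeff p)).support := hd
    rw [Finsupp.support_filter, Finset.mem_filter] at hd2
    have hPd : ∀ j : Fin q, j ≠ 0 → d j = 0 := hd2.2
    have hdeq : d = Finsupp.single (0 : Fin q) (d 0) := by
      ext j
      rcases eq_or_ne j 0 with rfl | hj
      · simp
      · rw [hPd j hj, Finsupp.single_apply, if_neg (by exact fun h => hj h.symm)]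
    have hdeg : t ≤ d.degree := hp d (hsupp1 hd)
    have hdd : d.degree = d 0 := by
      conv_lhs => rw [hdeq]
      rw [degree_single q]
    have hdeg2 : 2 ≤ d 0 := by omega
    have hmon : mkh k q n (monomial d (coeff d p1)) = coeff d p1 • (xA k q n 0 ^ (d 0)) := by
      rw [show monomial d (coeff d p1) = (coeff d p1) • monomial d 1 by
          rw [smul_monomial, smul_eq_mul, mul_one], map_smul]
      congr 1
      rw [xA_eq, ← map_pow, X_pow_eq_monomial, ← hdeq]
    rw [hmon]
    exact Submodule.smul_mem _ _ (xA_pow_mem_SA k q n hdeg2)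
  · -- remainder in q1A
    have : mkh k q n p - mkh k q n p1 = mkh k q n p2 := by
      rw [← map_sub]
      congr 1
      rw [← hsplit]
      ring
    rw [this, mem_q1A]
    intro d hd
    left
    have hd2 : d ∈ (Finsupp.filter (fun d => ¬ P d) (AddMonoidAlgebra.coeff p)).support := hd
    rw [Finsupp.support_filter, Finset.mem_filter] at hd2
    have hnP : ¬ ∀ j : Fin q, j ≠ 0 → d j = 0 := hd2.2
    push_neg at hnP
    obtain ⟨j, hj, hdj⟩ := hnP
    exact ⟨j, hj, hdj⟩
  · have : mkh k q n p - mkh k q n p1 = mkh k q n p2 := by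
      rw [← map_sub]; congr 1; rw [← hsplit]; ring
    rw [this, mem_mA_pow k q n htn]
    intro d hd
    exact hp d (hsupp2 hd)

/-- Lemma B: `q1 ∩ m^(t+1) ⊆ q1 * m^t`. -/
theorem q1A_inf_mA_pow [NeZero q] {t : ℕ} (ht : t + 1 ≤ n) {b : Aqn k q n}
    (hb1 : b ∈ q1A k q n) (hb2 : b ∈ mA k q n ^ (t + 1)) :
    b ∈ q1A k q n * mA k q n ^ t := by
  classical
  rw [mA_pow_eq_map] at hb2
  obtain ⟨p, hp, rfl⟩ := (Ideal.mem_map_iff_of_surjective _ (mkh_surjective k q n)).mp hb2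
  rw [mem_MMpow] at hp
  have hq1 := (mem_q1A k q n p).mp hb1
  set Pn : (Fin q →₀ ℕ) → Prop := fun d => n ≤ d.degree with hPn
  set p1 : MvPolynomial (Fin q) k := AddMonoidAlgebra.ofCoeff (Finsupp.filter Pn (AddMonoidAlgebra.coeff p)) with hp1
  set p2 : MvPolynomial (Fin q) k :=
    AddMonoidAlgebra.ofCoeff (Finsupp.filter (fun d => ¬ Pn d) (AddMonoidAlgebra.coeff p)) with hp2
  have hsplit : p1 + p2 = p :=
    congrArg AddMonoidAlgebra.ofCoeff (Finsupp.filter_pos_add_filter_neg (AddMonoidAlgebra.coeff p) Pn)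
  have hz : mkh k q n p1 = 0 := by
    apply Ideal.Quotient.eq_zero_iff_mem.mpr
    rw [mem_MMpow]
    intro d hd
    have hd2 : d ∈ (Finsupp.filter Pn (AddMonoidAlgebra.coeff p)).support := hd
    rw [Finsupp.support_filter, Finset.mem_filter] at hd2
    exact hd2.2
  have hbp2 : mkh k q n p = mkh k q n p2 := by
    rw [← hsplit, map_add, hz, zero_add]
  rw [hbp2, (as_sum p2), map_sum]
  apply Submodule.sum_mem
  intro d hd
  have hd' : d ∈ p.support ∧ ¬ n ≤ d.degree := by
    have hd2 : d ∈ (Finsupp.filter (fun d => ¬ Pn d) (AddMonoidAlgebra.coeff p)).support := hd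
    rw [Finsupp.support_filter, Finset.mem_filter] at hd2
    exact hd2
  obtain ⟨j, hj, hdj⟩ : ∃ j : Fin q, j ≠ 0 ∧ d j ≠ 0 := by
    rcases hq1 d hd'.1 with h | h
    · exact h
    · exact absurd h hd'.2
  have hle : Finsupp.single j 1 ≤ d := Finsupp.single_le_iff.mpr (by omega)
  have hcan : d - Finsupp.single j 1 + Finsupp.single j 1 = d := tsub_add_cancel_of_le hle
  have hfact : monomial d (coeff d p2) =
      X j * monomial (d - Finsupp.single j 1) (coeff d p2) := by
    rw [X, monomial_mul, one_mul, add_comm, hcan]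
  rw [hfact, map_mul]
  apply Ideal.mul_mem_mul
  · exact Ideal.subset_span ⟨j, hj, (xA_eq k q n j).symm ▸ rfl⟩
  · rw [mem_mA_pow k q n (by omega : t ≤ n)]
    intro e he
    have hc : coeff d p2 ≠ 0 := MvPolynomial.mem_support_iff.mp hd
    rw [support_monomial, if_neg hc, Finset.mem_singleton] at he
    subst he
    have := degree_add q (d - Finsupp.single j 1) (Finsupp.single j 1)
    rw [hcan, degree_single q] at this
    have hdeg : t + 1 ≤ d.degree := hp d hd'.1
    omega

/-- Key approximation lemma. -/
theorem key_approx [NeZero q] (J : Ideal (Aqn k q n)) (u : Fin q → Aqn k q n)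
    (hu1 : ∀ j : Fin q, j ≠ 0 → u j ∈ J)
    (hu2 : ∀ j : Fin q, j ≠ 0 → u j - xA k q n j ∈ mA k q n ^ 2) :
    ∀ t, 2 ≤ t → ∀ a ∈ mA k q n ^ t, ∃ s ∈ SA k q n, a - s ∈ J := by
  suffices h : ∀ c t, n ≤ t + c → 2 ≤ t → ∀ a ∈ mA k q n ^ t,
      ∃ s ∈ SA k q n, a - s ∈ J by
    intro t ht a ha
    exact h n t (by omega) ht a ha
  intro c
  induction c with
  | zero =>
    intro t hnt ht2 a ha
    have ha0 : a = 0 := by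
      have := Ideal.pow_le_pow_right (by omega : n ≤ t) ha
      rw [mA_pow_n] at this
      exact this
    exact ⟨0, Submodule.zero_mem _, by rw [ha0, sub_zero]; exact J.zero_mem⟩
  | succ c ih =>
    intro t hnt ht2 a ha
    by_cases hcase : n ≤ t
    · have ha0 : a = 0 := by
        have := Ideal.pow_le_pow_right hcase ha
        rw [mA_pow_n] at this
        exact this
      exact ⟨0, Submodule.zero_mem _, by rw [ha0, sub_zero]; exact J.zero_mem⟩
    · obtain ⟨t', rfl⟩ : ∃ t', t = t' + 1 := ⟨t - 1, by omega⟩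
      obtain ⟨s0, hs0, hq1, hmt⟩ := decomp_mA_pow k q n ht2 (by omega) ha
      have hbmul : a - s0 ∈ q1A k q n * mA k q n ^ t' :=
        q1A_inf_mA_pow k q n (by omega) hq1 hmt
      have hsub : q1A k q n * mA k q n ^ t' ≤ J ⊔ mA k q n ^ (t' + 2) := by
        rw [Ideal.mul_le]
        intro r hr s hs
        rw [q1A] at hr
        induction hr using Submodule.span_induction with
        | mem x hx =>
          obtain ⟨j, hj, rfl⟩ := hx
          have hxj : xA k q n j * s = u j * s - (u j - xA k q n j) * s := by ring
          rw [hxj]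
          apply Submodule.sub_mem
          · exact Submodule.mem_sup_left (Ideal.mul_mem_right s J (hu1 j hj))
          · apply Submodule.mem_sup_right
            have : (u j - xA k q n j) * s ∈ mA k q n ^ 2 * mA k q n ^ t' :=
              Ideal.mul_mem_mul (hu2 j hj) hs
            rwa [← pow_add, show 2 + t' = t' + 2 by omega] at this
        | zero => rw [zero_mul]; exact Submodule.zero_mem _
        | add x y hx hy hx' hy' => rw [add_mul]; exact Submodule.add_mem _ hx' hy'
        | smul a x hx hx' =>
          rw [smul_eq_mul, mul_assoc]
          exact Ideal.mul_mem_left _ a hx'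
      obtain ⟨e, he, cc, hcc, hec⟩ := Submodule.mem_sup.mp (hsub hbmul)
      obtain ⟨s1, hs1, hcs⟩ := ih (t' + 2) (by omega) (by omega) cc hcc
      refine ⟨s0 + s1, Submodule.add_mem _ hs0 hs1, ?_⟩
      have : a - (s0 + s1) = e + (cc - s1) := by
        linear_combination -hec
      rw [this]
      exact J.add_mem he hcs


/-! ### Nilradical facts and closure lemmas -/

theorem nontrivial_Aqn (hn : 1 ≤ n) : Nontrivial (Aqn k q n) := by
  refine ⟨1, 0, fun h => ?_⟩
  have h1 : mkh k q n 1 = 0 := by rw [map_one]; exact h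
  have h2 : (1 : MvPolynomial (Fin q) k) ∈ MM k q ^ n :=
    Ideal.Quotient.eq_zero_iff_mem.mp h1
  rw [mem_MMpow] at h2
  have h0 : (0 : Fin q →₀ ℕ) ∈ (1 : MvPolynomial (Fin q) k).support := by
    rw [mem_support_iff, coeff_zero_one]
    exact one_ne_zero
  have := h2 0 h0
  rw [map_zero] at this
  omega

theorem exists_const_add (hn : 1 ≤ n) (a : Aqn k q n) :
    ∃ c : k, a - algebraMap k (Aqn k q n) c ∈ mA k q n := by
  obtain ⟨p, rfl⟩ := mkh_surjective k q n a
  refine ⟨constantCoeff p, ?_⟩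
  have h1 : algebraMap k (Aqn k q n) (constantCoeff p)
      = mkh k q n (C (constantCoeff p)) := by
    rw [← MvPolynomial.algebraMap_eq]
    exact (AlgHom.commutes _ _).symm
  rw [h1, ← map_sub]
  have h2 : mA k q n = mA k q n ^ 1 := (pow_one _).symm
  rw [h2, mem_mA_pow k q n hn]
  intro d hd
  rcases Nat.eq_zero_or_pos d.degree with hzero | hpos
  case inr => omega
  · exfalso
    have hd0 : d = 0 := (Finsupp.degree_eq_zero_iff d).mp hzero
    rw [mem_support_iff, hd0] at hd
    apply hd
    classical
    rw [coeff_sub, coeff_C, if_pos rfl]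
    have : coeff 0 p = constantCoeff p := rfl
    rw [this, sub_self]

theorem isNilpotent_of_mem_mA {x : Aqn k q n} (hx : x ∈ mA k q n) : IsNilpotent x := by
  refine ⟨n, ?_⟩
  have : x ^ n ∈ mA k q n ^ n := Ideal.pow_mem_pow hx n
  rwa [mA_pow_n] at this

theorem mem_mA_of_isNilpotent (hn : 2 ≤ n) {x : Aqn k q n} (hx : IsNilpotent x) :
    x ∈ mA k q n := by
  haveI : Nontrivial (Aqn k q n) := nontrivial_Aqn k q n (by omega)
  obtain ⟨c, hc⟩ := exists_const_add k q n (by omega) x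
  rcases eq_or_ne c 0 with rfl | hc0
  · rwa [map_zero, sub_zero] at hc
  · exfalso
    have hu : IsUnit (algebraMap k (Aqn k q n) c) :=
      (algebraMap k (Aqn k q n)).isUnit_map (isUnit_iff_ne_zero.mpr hc0)
    have hnil : IsNilpotent (x - algebraMap k (Aqn k q n) c) :=
      isNilpotent_of_mem_mA k q n hc
    have hxu : IsUnit x := by
      have := IsNilpotent.isUnit_add_left_of_commute hnil hu (Commute.all _ _)
      rwa [add_sub_cancel] at this
    exact hx.not_isUnit hxu

theorem mem_mA_iff_apply (hn : 2 ≤ n) (φ : Aqn k q n ≃ₐ[k] Aqn k q n) {x : Aqn k q n} :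
    φ x ∈ mA k q n ↔ x ∈ mA k q n := by
  constructor
  · intro h
    apply mem_mA_of_isNilpotent k q n hn
    have := isNilpotent_of_mem_mA k q n h
    obtain ⟨e, he⟩ := this
    refine ⟨e, ?_⟩
    have : φ (x ^ e) = 0 := by rw [map_pow, he]
    have h2 := congrArg φ.symm this
    rwa [AlgEquiv.symm_apply_apply, map_zero] at h2
  · intro h
    apply mem_mA_of_isNilpotent k q n hn
    obtain ⟨e, he⟩ := isNilpotent_of_mem_mA k q n h
    exact ⟨e, by rw [← map_pow, he, map_zero]⟩

/-- elementwise description of `Ideal.map` along an algebra automorphism. -/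
theorem mem_map_iff (φ : Aqn k q n ≃ₐ[k] Aqn k q n) (I : Ideal (Aqn k q n)) {x : Aqn k q n} :
    x ∈ Ideal.map φ I ↔ φ.symm x ∈ I := by
  rw [Ideal.mem_map_of_equiv]
  constructor
  · rintro ⟨y, hy, rfl⟩
    rwa [AlgEquiv.symm_apply_apply]
  · intro h
    exact ⟨φ.symm x, h, φ.apply_symm_apply x⟩

theorem map_mA_eq (hn : 2 ≤ n) (φ : Aqn k q n ≃ₐ[k] Aqn k q n) :
    Ideal.map φ (mA k q n) = mA k q n := by
  ext x
  rw [mem_map_iff]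
  exact mem_mA_iff_apply k q n hn φ.symm

theorem map_mA_pow_two (hn : 2 ≤ n) (φ : Aqn k q n ≃ₐ[k] Aqn k q n) {x : Aqn k q n}
    (hx : x ∈ mA k q n ^ 2) : φ x ∈ mA k q n ^ 2 := by
  have h1 : Ideal.map φ (mA k q n ^ 2) = mA k q n ^ 2 := by
    rw [Ideal.map_pow, map_mA_eq k q n hn]
  rw [← h1]
  exact Ideal.mem_map_of_mem _ hx

theorem IqnSet_comp (hn : 2 ≤ n) {σ ρ : Aqn k q n ≃ₐ[k] Aqn k q n}
    (hσ : σ ∈ IqnSet k q n) (hρ : ρ ∈ IqnSet k q n) :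
    ρ.trans σ ∈ IqnSet k q n := by
  intro i
  have : (ρ.trans σ) (xA k q n i) - xA k q n i
      = σ (ρ (xA k q n i) - xA k q n i) + (σ (xA k q n i) - xA k q n i) := by
    rw [map_sub]
    simp [AlgEquiv.trans_apply]
  rw [this]
  exact Submodule.add_mem _ (map_mA_pow_two k q n hn σ (hρ i)) (hσ i)

theorem IqnSet_inv (hn : 2 ≤ n) {σ : Aqn k q n ≃ₐ[k] Aqn k q n}
    (hσ : σ ∈ IqnSet k q n) : σ.symm ∈ IqnSet k q n := by
  intro i
  have : σ.symm (xA k q n i) - xA k q n i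
      = - σ.symm (σ (xA k q n i) - xA k q n i) := by
    rw [map_sub, AlgEquiv.symm_apply_apply]
    ring
  rw [this]
  exact Submodule.neg_mem _ (map_mA_pow_two k q n hn σ.symm (hσ i))


/-! ### Gamma lemmas -/

theorem gamma_fixes_SA [NeZero q] {γ : Aqn k q n ≃ₐ[k] Aqn k q n}
    (hγ : γ ∈ GammaSet k q n) : ∀ s ∈ SA k q n, γ s = s := by
  intro s hs
  rw [SA] at hs
  induction hs using Submodule.span_induction with
  | mem x hx =>
    obtain ⟨j, hj2, hjn, rfl⟩ := hx
    rw [map_pow, hγ.1]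
  | zero => rw [map_zero]
  | add x y hx hy hx' hy' => rw [map_add, hx', hy']
  | smul c x hx hx' => rw [map_smul, hx']

theorem GammaSet_inv [NeZero q] {γ : Aqn k q n ≃ₐ[k] Aqn k q n}
    (hγ : γ ∈ GammaSet k q n) : γ.symm ∈ GammaSet k q n := by
  constructor
  · exact (AlgEquiv.symm_apply_eq γ).mpr hγ.1.symm
  · intro i hi
    have hs : γ (xA k q n i) - xA k q n i ∈ SA k q n := hγ.2 i hi
    have h1 : γ.symm (xA k q n i) = xA k q n i - (γ (xA k q n i) - xA k q n i) := by
      have h2 : γ (xA k q n i - (γ (xA k q n i) - xA k q n i)) = xA k q n i := by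
        rw [map_sub, gamma_fixes_SA k q n hγ _ hs]
        exact sub_sub_cancel _ _
      have h3 := congrArg γ.symm h2
      rw [AlgEquiv.symm_apply_apply] at h3
      exact h3.symm
    rw [h1]
    have : xA k q n i - (γ (xA k q n i) - xA k q n i) - xA k q n i
        = -(γ (xA k q n i) - xA k q n i) := by ring
    rw [this]
    exact Submodule.neg_mem _ hs

theorem GammaSet_comp [NeZero q] {γ δ : Aqn k q n ≃ₐ[k] Aqn k q n}
    (hγ : γ ∈ GammaSet k q n) (hδ : δ ∈ GammaSet k q n) :
    δ.trans γ ∈ GammaSet k q n := by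
  constructor
  · rw [AlgEquiv.trans_apply, hδ.1, hγ.1]
  · intro i hi
    have : (δ.trans γ) (xA k q n i) - xA k q n i
        = γ (δ (xA k q n i) - xA k q n i) + (γ (xA k q n i) - xA k q n i) := by
      rw [map_sub, AlgEquiv.trans_apply]
      ring
    rw [this, gamma_fixes_SA k q n hγ _ (hδ.2 i hi)]
    exact Submodule.add_mem _ (hδ.2 i hi) (hγ.2 i hi)

theorem GammaSet_subset_Iqn [NeZero q] {γ : Aqn k q n ≃ₐ[k] Aqn k q n}
    (hγ : γ ∈ GammaSet k q n) : γ ∈ IqnSet k q n := by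
  intro i
  rcases eq_or_ne i 0 with rfl | hi
  · rw [hγ.1, sub_self]
    exact Submodule.zero_mem _
  · exact SA_le_mA_pow_two k q n _ (hγ.2 i hi)

/-! ### Extensionality and construction of automorphisms -/

theorem algHom_ext' {B : Type} [CommRing B] [Algebra k B] {φ ψ : Aqn k q n →ₐ[k] B}
    (h : ∀ i, φ (xA k q n i) = ψ (xA k q n i)) : φ = ψ := by
  have hcomp : φ.comp (mkh k q n) = ψ.comp (mkh k q n) :=
    MvPolynomial.algHom_ext (fun i => h i)
  ext a
  obtain ⟨p, rfl⟩ := mkh_surjective k q n a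
  exact DFunLike.congr_fun hcomp p

/-- The algebra hom `MvPolynomial → Aqn` sending `X j` to `x_j + s j`. -/
def gammaHom [NeZero q] (s : Fin q → Aqn k q n) : MvPolynomial (Fin q) k →ₐ[k] Aqn k q n :=
  aeval (fun j => xA k q n j + s j)

theorem gammaHom_vanish [NeZero q] (s : Fin q → Aqn k q n) (hs : ∀ j, s j ∈ SA k q n) :
    ∀ p ∈ MM k q ^ n, gammaHom k q n s p = 0 := by
  intro p hp
  have hle : Ideal.map (gammaHom k q n s) (MM k q) ≤ mA k q n := by
    rw [MM, Ideal.map_span, Ideal.span_le]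
    rintro _ ⟨_, ⟨i, rfl⟩, rfl⟩
    have h1 : gammaHom k q n s (X i) = xA k q n i + s i := by
      rw [gammaHom, aeval_X]
    rw [h1]
    exact Submodule.add_mem _ (xA_mem_mA k q n i)
      (Ideal.pow_le_self (two_ne_zero) (SA_le_mA_pow_two k q n _ (hs i)))
  have hbot : Ideal.map (gammaHom k q n s) (MM k q ^ n) ≤ ⊥ := by
    rw [Ideal.map_pow, ← mA_pow_n k q n]
    exact Ideal.pow_right_mono hle n
  exact hbot (Ideal.mem_map_of_mem _ hp)

/-- The induced algebra endomorphism of `Aqn`. -/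
def gammaAlgHom [NeZero q] (s : Fin q → Aqn k q n) (hs : ∀ j, s j ∈ SA k q n) :
    Aqn k q n →ₐ[k] Aqn k q n :=
  Ideal.Quotient.liftₐ (MM k q ^ n) (gammaHom k q n s) (gammaHom_vanish k q n s hs)

theorem gammaAlgHom_x [NeZero q] (s : Fin q → Aqn k q n) (hs : ∀ j, s j ∈ SA k q n)
    (i : Fin q) : gammaAlgHom k q n s hs (xA k q n i) = xA k q n i + s i := by
  have h2 : gammaAlgHom k q n s hs (Ideal.Quotient.mk (MM k q ^ n) (X i))
      = gammaHom k q n s (X i) := by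
    rw [gammaAlgHom, Ideal.Quotient.liftₐ_apply]
    rfl
  calc gammaAlgHom k q n s hs (xA k q n i) = gammaHom k q n s (X i) := h2
    _ = xA k q n i + s i := by rw [gammaHom, aeval_X]

theorem gammaAlgHom_fixes_SA [NeZero q] (s : Fin q → Aqn k q n) (hs : ∀ j, s j ∈ SA k q n)
    (h0 : s 0 = 0) : ∀ x ∈ SA k q n, gammaAlgHom k q n s hs x = x := by
  intro x hx
  rw [SA] at hx
  induction hx using Submodule.span_induction with
  | mem y hy =>
    obtain ⟨j, hj2, hjn, rfl⟩ := hy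
    rw [map_pow, gammaAlgHom_x, h0, add_zero]
  | zero => rw [map_zero]
  | add x y hx hy hx' hy' => rw [map_add, hx', hy']
  | smul c x hx hx' => rw [map_smul, hx']

/-- The automorphism of `Aqn` sending `x_j` to `x_j + s j`, for `s j ∈ S`, `s 0 = 0`. -/
def gammaEquiv [NeZero q] (s : Fin q → Aqn k q n) (hs : ∀ j, s j ∈ SA k q n)
    (h0 : s 0 = 0) : Aqn k q n ≃ₐ[k] Aqn k q n :=
  AlgEquiv.ofAlgHom (gammaAlgHom k q n s hs)
    (gammaAlgHom k q n (fun j => - s j) (fun j => Submodule.neg_mem _ (hs j)))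
    (by
      apply algHom_ext' k q n
      intro i
      rw [AlgHom.comp_apply, gammaAlgHom_x, AlgHom.id_apply, map_add, gammaAlgHom_x, map_neg,
        gammaAlgHom_fixes_SA k q n s hs h0 _ (hs i)]
      ring)
    (by
      apply algHom_ext' k q n
      intro i
      rw [AlgHom.comp_apply, gammaAlgHom_x, AlgHom.id_apply, map_add, gammaAlgHom_x,
        gammaAlgHom_fixes_SA k q n (fun j => - s j) _ (by show -s 0 = 0; rw [h0, neg_zero]) _ (hs i)]
      ring)

theorem gammaEquiv_x [NeZero q] (s : Fin q → Aqn k q n) (hs : ∀ j, s j ∈ SA k q n)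
    (h0 : s 0 = 0) (i : Fin q) :
    gammaEquiv k q n s hs h0 (xA k q n i) = xA k q n i + s i :=
  gammaAlgHom_x k q n s hs i

theorem gammaEquiv_symm_x [NeZero q] (s : Fin q → Aqn k q n) (hs : ∀ j, s j ∈ SA k q n)
    (h0 : s 0 = 0) (i : Fin q) :
    (gammaEquiv k q n s hs h0).symm (xA k q n i) = xA k q n i - s i := by
  have : (gammaEquiv k q n s hs h0).symm (xA k q n i)
      = gammaAlgHom k q n (fun j => - s j) (fun j => Submodule.neg_mem _ (hs j)) (xA k q n i) :=
    rfl
  rw [this, gammaAlgHom_x]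
  ring

theorem gammaEquiv_mem [NeZero q] (s : Fin q → Aqn k q n) (hs : ∀ j, s j ∈ SA k q n)
    (h0 : s 0 = 0) : gammaEquiv k q n s hs h0 ∈ GammaSet k q n := by
  constructor
  · rw [gammaEquiv_x, h0, add_zero]
  · intro i hi
    rw [gammaEquiv_x]
    have : xA k q n i + s i - xA k q n i = s i := by ring
    rw [this]
    exact hs i


/-! ### Finite dimensionality -/

theorem finiteDimensional_Aqn : FiniteDimensional k (Aqn k q n) := by
  classical
  apply Module.Finite.of_fg_top
  rw [Submodule.fg_def]
  refine ⟨(fun d => mkh k q n (monomial d 1)) '' {d : Fin q →₀ ℕ | d.degree ≤ n}, ?_, ?_⟩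
  · exact (Finsupp.finite_of_degree_le n).image _
  · rw [eq_top_iff]
    intro a _
    obtain ⟨p, rfl⟩ := mkh_surjective k q n a
    rw [(as_sum p), map_sum]
    apply Submodule.sum_mem
    intro d hd
    rcases le_or_gt d.degree n with hle | hgt
    · have h1 : mkh k q n (monomial d (coeff d p)) = coeff d p • mkh k q n (monomial d 1) := by
        rw [show monomial d (coeff d p) = coeff d p • monomial d 1 by
          rw [smul_monomial, smul_eq_mul, mul_one], map_smul]
      rw [h1]
      exact Submodule.smul_mem _ _ (Submodule.subset_span ⟨d, hle, rfl⟩)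
    · have h0 : mkh k q n (monomial d (coeff d p)) = 0 := by
        apply Ideal.Quotient.eq_zero_iff_mem.mpr
        rw [mem_MMpow]
        intro e he
        rw [support_monomial, if_neg (mem_support_iff.mp hd), Finset.mem_singleton] at he
        subst he
        omega
      rw [h0]
      exact Submodule.zero_mem _

theorem map_restrictScalars (φ : Aqn k q n ≃ₐ[k] Aqn k q n) (I : Ideal (Aqn k q n)) :
    (Ideal.map φ I).restrictScalars k
      = Submodule.map (φ.toLinearEquiv : Aqn k q n →ₗ[k] Aqn k q n)
          (I.restrictScalars k) := by
  ext x
  rw [Submodule.restrictScalars_mem, mem_map_iff k q n, Submodule.mem_map_equiv]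
  rfl

theorem map_ideal_eq_of_le (φ ψ : Aqn k q n ≃ₐ[k] Aqn k q n) (I : Ideal (Aqn k q n))
    (h : Ideal.map φ I ≤ Ideal.map ψ I) : Ideal.map φ I = Ideal.map ψ I := by
  haveI := finiteDimensional_Aqn k q n
  apply Submodule.restrictScalars_injective k _ _
  apply Submodule.eq_of_le_of_finrank_eq
  · exact h
  · rw [map_restrictScalars, map_restrictScalars, LinearEquiv.finrank_map_eq,
      LinearEquiv.finrank_map_eq]

/-! ### `S ∩ q1 = 0` -/

theorem SA_inter_q1A [NeZero q] {s : Aqn k q n} (hs : s ∈ SA k q n)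
    (hq : s ∈ q1A k q n) : s = 0 := by
  classical
  have hSA : SA k q n = Submodule.map (mkh k q n).toLinearMap
      (Submodule.span k {p : MvPolynomial (Fin q) k | ∃ j, 2 ≤ j ∧ j ≤ n - 1 ∧ p = X 0 ^ j}) := by
    rw [SA, ← Submodule.span_image]
    congr 1
    ext y
    constructor
    · rintro ⟨j, h2, h3, rfl⟩
      exact ⟨X 0 ^ j, ⟨j, h2, h3, rfl⟩, by rw [AlgHom.toLinearMap_apply, map_pow]; rfl⟩
    · rintro ⟨p, ⟨j, h2, h3, rfl⟩, rfl⟩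
      exact ⟨j, h2, h3, by rw [AlgHom.toLinearMap_apply, map_pow]; rfl⟩
  rw [hSA] at hs
  obtain ⟨p, hp, rfl⟩ := hs
  have hsupp : ∀ x ∈ Submodule.span k
      {p : MvPolynomial (Fin q) k | ∃ j, 2 ≤ j ∧ j ≤ n - 1 ∧ p = X 0 ^ j},
      ∀ d ∈ MvPolynomial.support x, ∃ j : ℕ, 2 ≤ j ∧ j ≤ n - 1 ∧ d = Finsupp.single 0 j := by
    intro x hx
    induction hx using Submodule.span_induction with
    | mem y hy =>
      obtain ⟨j, h2, h3, rfl⟩ := hy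
      intro d hd
      rw [X_pow_eq_monomial, support_monomial,
        if_neg (one_ne_zero : (1:k) ≠ 0), Finset.mem_singleton] at hd
      exact ⟨j, h2, h3, hd⟩
    | zero => intro d hd; simp at hd
    | add x y hx hy hx' hy' =>
      intro d hd
      rcases Finset.mem_union.mp (support_add hd) with h | h
      · exact hx' d h
      · exact hy' d h
    | smul c x hx hx' =>
      intro d hd
      exact hx' d (support_smul hd)
  have hq' := (mem_q1A k q n p).mp (by
    have h1 : (mkh k q n).toLinearMap p = mkh k q n p := rfl
    rwa [h1] at hq)
  have hempty : MvPolynomial.support p = ∅ := by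
    rw [Finset.eq_empty_iff_forall_notMem]
    intro d hd
    obtain ⟨j, h2, h3, rfl⟩ := hsupp p hp d hd
    rcases hq' _ hd with ⟨i, hi, hdi⟩ | hdeg
    · exact hdi (Finsupp.single_eq_of_ne (fun h => hi h))
    · rw [degree_single q] at hdeg
      omega
  have : p = 0 := support_eq_empty.mp hempty
  rw [this]
  exact map_zero _

/-! ### G1 closure -/

theorem map_trans_ideal (φ ψ : Aqn k q n ≃ₐ[k] Aqn k q n) (I : Ideal (Aqn k q n)) :
    Ideal.map (φ.trans ψ) I = Ideal.map ψ (Ideal.map φ I) := by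
  ext x
  rw [mem_map_iff k q n, mem_map_iff k q n, mem_map_iff k q n, AlgEquiv.symm_trans_apply]

theorem G1_comp [NeZero q] {σ ρ : Aqn k q n ≃ₐ[k] Aqn k q n}
    (hσ : σ ∈ G1Set k q n) (hρ : ρ ∈ G1Set k q n) : ρ.trans σ ∈ G1Set k q n := by
  show Ideal.map (ρ.trans σ) (q1A k q n) = q1A k q n
  rw [map_trans_ideal, hρ, hσ]

theorem G1_inv [NeZero q] {σ : Aqn k q n ≃ₐ[k] Aqn k q n}
    (hσ : σ ∈ G1Set k q n) : σ.symm ∈ G1Set k q n := by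
  show Ideal.map σ.symm (q1A k q n) = q1A k q n
  ext x
  rw [mem_map_iff k q n, AlgEquiv.symm_symm]
  constructor
  · intro h
    have : σ x ∈ Ideal.map σ (q1A k q n) := hσ.symm ▸ h
    rw [mem_map_iff k q n, AlgEquiv.symm_apply_apply] at this
    exact this
  · intro h
    have : σ x ∈ Ideal.map σ (q1A k q n) := by
      rw [mem_map_iff k q n, AlgEquiv.symm_apply_apply]
      exact h
    rw [hσ] at this
    exact this


theorem algEquiv_ext' {φ ψ : Aqn k q n ≃ₐ[k] Aqn k q n}
    (h : ∀ i, φ (xA k q n i) = ψ (xA k q n i)) : φ = ψ := by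
  have h2 : (φ : Aqn k q n →ₐ[k] Aqn k q n) = (ψ : Aqn k q n →ₐ[k] Aqn k q n) :=
    algHom_ext' k q n h
  exact AlgEquiv.ext fun a => DFunLike.congr_fun h2 a

theorem xA_mem_q1A [NeZero q] {i : Fin q} (hi : i ≠ 0) : xA k q n i ∈ q1A k q n :=
  Ideal.subset_span ⟨i, hi, rfl⟩

end GammaAux

open GammaAux in
/-- the multiplication (composition) map
`Γ × (I_{q,n} ∩ G_1) → I_{q,n}, (γ, σ) ↦ γ ∘ σ`, is a bijection. -/
theorem Gamma_complement (k : Type) [Field k] (q n : ℕ) [NeZero q]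
    (hq : 2 ≤ q) (hn : 2 ≤ n) :
    Set.BijOn
      (fun p : (Aqn k q n ≃ₐ[k] Aqn k q n) × (Aqn k q n ≃ₐ[k] Aqn k q n) =>
        AlgEquiv.trans p.2 p.1)
      (GammaSet k q n ×ˢ (IqnSet k q n ∩ G1Set k q n))
      (IqnSet k q n) := by
  refine ⟨?_, ?_, ?_⟩
  · -- MapsTo
    rintro ⟨γ, τ⟩ ⟨hγ, hτI, hτG⟩
    exact IqnSet_comp k q n hn (GammaSet_subset_Iqn k q n hγ) hτI
  · -- InjOn
    rintro ⟨γ₁, τ₁⟩ ⟨hγ₁, hτ₁I, hτ₁G⟩ ⟨γ₂, τ₂⟩ ⟨hγ₂, hτ₂I, hτ₂G⟩ heq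
    have heq' : τ₁.trans γ₁ = τ₂.trans γ₂ := heq
    have hfun : ∀ a, γ₁ (τ₁ a) = γ₂ (τ₂ a) := fun a => DFunLike.congr_fun heq' a
    set δ := γ₁.trans γ₂.symm with hδdef
    have hδΓ : δ ∈ GammaSet k q n := GammaSet_comp k q n (GammaSet_inv k q n hγ₂) hγ₁
    have hδeq : δ = τ₁.symm.trans τ₂ := by
      apply AlgEquiv.ext
      intro b
      show γ₂.symm (γ₁ b) = τ₂ (τ₁.symm b)
      rw [show γ₁ b = γ₁ (τ₁ (τ₁.symm b)) by rw [AlgEquiv.apply_symm_apply],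
        hfun (τ₁.symm b), AlgEquiv.symm_apply_apply]
    have hδG1 : δ ∈ G1Set k q n := by
      rw [hδeq]
      exact G1_comp k q n hτ₂G (G1_inv k q n hτ₁G)
    have hδx : ∀ i, δ (xA k q n i) = xA k q n i := by
      intro i
      rcases eq_or_ne i 0 with rfl | hi
      · exact hδΓ.1
      · have hS : δ (xA k q n i) - xA k q n i ∈ SA k q n := hδΓ.2 i hi
        have hq1 : δ (xA k q n i) - xA k q n i ∈ q1A k q n := by
          apply Submodule.sub_mem _ _ (xA_mem_q1A k q n hi)
          have : δ (xA k q n i) ∈ Ideal.map δ (q1A k q n) :=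
            Ideal.mem_map_of_mem _ (xA_mem_q1A k q n hi)
          rwa [hδG1] at this
        have h0 : δ (xA k q n i) - xA k q n i = 0 := SA_inter_q1A k q n hS hq1
        rw [sub_eq_zero] at h0
        exact h0
    have hγeq : γ₁ = γ₂ := by
      apply algEquiv_ext' k q n
      intro i
      have := hδx i
      rw [hδdef, AlgEquiv.trans_apply] at this
      have h2 := congrArg γ₂ this
      rwa [AlgEquiv.apply_symm_apply] at h2
    have hτeq : τ₁ = τ₂ := by
      apply AlgEquiv.ext
      intro a
      apply γ₁.injective
      rw [hfun a, hγeq]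
    rw [Prod.mk.injEq]
    exact ⟨hγeq, hτeq⟩
  · -- SurjOn
    intro σ hσ
    have key := key_approx k q n (Ideal.map σ (q1A k q n)) (fun j => σ (xA k q n j))
      (fun j hj => Ideal.mem_map_of_mem _ (xA_mem_q1A k q n hj))
      (fun j _ => hσ j)
    have hex : ∀ i : Fin q, ∃ s, s ∈ SA k q n ∧
        (i ≠ 0 → xA k q n i + s ∈ Ideal.map σ (q1A k q n)) ∧ (i = 0 → s = 0) := by
      intro i
      rcases eq_or_ne i 0 with rfl | hi
      · exact ⟨0, Submodule.zero_mem _, fun h => absurd rfl h, fun _ => rfl⟩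
      · obtain ⟨s, hsS, hsJ⟩ := key 2 le_rfl (σ (xA k q n i) - xA k q n i) (hσ i)
        refine ⟨s, hsS, fun _ => ?_, fun h => absurd h hi⟩
        have hxi : xA k q n i + s
            = σ (xA k q n i) - ((σ (xA k q n i) - xA k q n i) - s) := by ring
        rw [hxi]
        exact Submodule.sub_mem _ (Ideal.mem_map_of_mem _ (xA_mem_q1A k q n hi)) hsJ
    choose s hsS hsJ hs0 using hex
    set γ := gammaEquiv k q n s hsS (hs0 0 rfl) with hγdef
    have hγΓ : γ ∈ GammaSet k q n := gammaEquiv_mem k q n s hsS (hs0 0 rfl)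
    have hle : Ideal.map γ (q1A k q n) ≤ Ideal.map σ (q1A k q n) := by
      rw [q1A, Ideal.map_span, Ideal.span_le]
      rintro _ ⟨y, ⟨i, hi, rfl⟩, rfl⟩
      have h1 : γ (xA k q n i) = xA k q n i + s i := gammaEquiv_x k q n s hsS (hs0 0 rfl) i
      rw [SetLike.mem_coe, h1]
      exact hsJ i hi
    have heqJ : Ideal.map γ (q1A k q n) = Ideal.map σ (q1A k q n) :=
      map_ideal_eq_of_le k q n γ σ _ hle
    refine ⟨(γ, σ.trans γ.symm), ⟨hγΓ, ?_, ?_⟩, ?_⟩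
    · exact IqnSet_comp k q n hn (IqnSet_inv k q n hn (GammaSet_subset_Iqn k q n hγΓ)) hσ
    · show Ideal.map (σ.trans γ.symm) (q1A k q n) = q1A k q n
      rw [map_trans_ideal, ← heqJ, ← map_trans_ideal]
      ext x
      rw [mem_map_iff k q n, AlgEquiv.symm_trans_apply, AlgEquiv.symm_symm,
        AlgEquiv.symm_apply_apply]
    · show AlgEquiv.trans (σ.trans γ.symm) γ = σ
      apply AlgEquiv.ext
      intro a
      rw [AlgEquiv.trans_apply, AlgEquiv.trans_apply, AlgEquiv.apply_symm_apply]
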